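/- Let K ⊆ ℂ be compact, W ⊆ ℂⁿ open, and g : K × W → ℂ continuous and holomorphic in w ∈ W for each fixed z ∈ K. Then the function (z, w) ↦ T_K(g(·, w))(z), where T_K is the Cauchy–Green operator applied in the z-variable, is continuous on ℂ × W and holomorphic in w ∈ W for each fixed z ∈ ℂ. -/

import Mathlib

open MeasureTheory Metric Set
open scoped ENNReal

lemma lint_ker (z : ℂ) {r : ℝ} (hr : 0 ≤ r) :
    ∫⁻ ζ in closedBall z r, ENNReal.ofReal ‖z - ζ‖⁻¹ ≤
      ENNReal.ofReal r * (4 * volume (ball (0:ℂ) 1)) := by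
  rcases eq_or_lt_of_le hr with h0 | hr
  · have : volume (closedBall z r) = 0 := by
      rw [← h0, closedBall_zero]
      exact measure_singleton z
    rw [setLIntegral_measure_zero _ _ this]
    exact zero_le
  set A : ℕ → Set ℂ := fun k => closedBall z (r * 2⁻¹ ^ k) \ closedBall z (r * 2⁻¹ ^ (k+1)) with hA
  have hsub : closedBall z r \ {z} ⊆ ⋃ k, A k := by
    rintro ζ ⟨hζ, hz⟩
    have hd : 0 < dist ζ z := dist_pos.2 hz
    have hdr : dist ζ z ≤ r := mem_closedBall.1 hζ
    have hex : ∃ k : ℕ, r * 2⁻¹ ^ (k+1) < dist ζ z := by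
      obtain ⟨m, hm⟩ := exists_pow_lt_of_lt_one (div_pos hd hr) (by norm_num : (2:ℝ)⁻¹ < 1)
      refine ⟨m, ?_⟩
      have h2 : (2:ℝ)⁻¹ ^ (m+1) ≤ 2⁻¹ ^ m :=
        pow_le_pow_of_le_one (by norm_num) (by norm_num) (Nat.le_succ m)
      have := (lt_div_iff₀ hr).1 hm
      nlinarith
    set k := Nat.find hex with hk
    have h1 : r * 2⁻¹ ^ (k+1) < dist ζ z := Nat.find_spec hex
    have h2 : dist ζ z ≤ r * 2⁻¹ ^ k := by
      rcases Nat.eq_zero_or_pos k with h | h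
      · simpa [h] using hdr
      · have := Nat.find_min hex (m := k - 1) (by omega)
        push_neg at this
        have hk1 : k - 1 + 1 = k := by omega
        simpa [hk1] using this
    exact mem_iUnion.2 ⟨k, ⟨mem_closedBall.2 h2, fun hmem => absurd (mem_closedBall.1 hmem) (not_le.2 h1)⟩⟩
  have hV : volume (ball (0:ℂ) 1) ≠ ⊤ := measure_ball_lt_top.ne
  calc ∫⁻ ζ in closedBall z r, ENNReal.ofReal ‖z - ζ‖⁻¹
      = ∫⁻ ζ in closedBall z r \ {z}, ENNReal.ofReal ‖z - ζ‖⁻¹ := by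
        refine (setLIntegral_congr ?_).symm
        exact diff_ae_eq_self.2 (measure_mono_null (inter_subset_right) (measure_singleton z))
    _ ≤ ∫⁻ ζ in ⋃ k, A k, ENNReal.ofReal ‖z - ζ‖⁻¹ := lintegral_mono_set hsub
    _ ≤ ∑' k, ∫⁻ ζ in A k, ENNReal.ofReal ‖z - ζ‖⁻¹ := lintegral_iUnion_le _ _
    _ ≤ ∑' k, ENNReal.ofReal (r * 2⁻¹ ^ k * 2) * volume (ball (0:ℂ) 1) := by
        refine ENNReal.tsum_le_tsum fun k => ?_
        have hb : ∀ ζ ∈ A k, ENNReal.ofReal ‖z - ζ‖⁻¹ ≤ ENNReal.ofReal (r * 2⁻¹ ^ (k+1))⁻¹ := by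
          rintro ζ ⟨-, hζ2⟩
          have : r * 2⁻¹ ^ (k+1) < dist ζ z := not_le.1 fun h => hζ2 (mem_closedBall.2 h)
          refine ENNReal.ofReal_le_ofReal ?_
          rw [← dist_eq_norm, dist_comm]
          exact inv_anti₀ (by positivity) this.le
        have hAm : MeasurableSet (A k) := measurableSet_closedBall.diff measurableSet_closedBall
        calc ∫⁻ ζ in A k, ENNReal.ofReal ‖z - ζ‖⁻¹
            ≤ ∫⁻ _ in A k, ENNReal.ofReal (r * 2⁻¹ ^ (k+1))⁻¹ := setLIntegral_mono' hAm hb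
          _ = ENNReal.ofReal (r * 2⁻¹ ^ (k+1))⁻¹ * volume (A k) := by
              rw [setLIntegral_const]
          _ ≤ ENNReal.ofReal (r * 2⁻¹ ^ (k+1))⁻¹ * volume (closedBall z (r * 2⁻¹ ^ k)) := by
              gcongr
              exact diff_subset
          _ = ENNReal.ofReal (r * 2⁻¹ ^ (k+1))⁻¹ *
                (ENNReal.ofReal ((r * 2⁻¹ ^ k) ^ Module.finrank ℝ ℂ) * volume (ball (0:ℂ) 1)) := by
              rw [Measure.addHaar_closedBall _ _ (by positivity)]
          _ = ENNReal.ofReal (r * 2⁻¹ ^ k * 2) * volume (ball (0:ℂ) 1) := by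
              rw [← mul_assoc, ← ENNReal.ofReal_mul (by positivity)]
              congr 2
              rw [Complex.finrank_real_complex]
              have h1 : (0:ℝ) < r * 2⁻¹ ^ (k+1) := by positivity
              field_simp
              ring
    _ = ENNReal.ofReal r * (4 * volume (ball (0:ℂ) 1)) := by
        have : ∀ k : ℕ, ENNReal.ofReal (r * 2⁻¹ ^ k * 2) =
            ENNReal.ofReal (2 * r) * (2⁻¹ : ℝ≥0∞) ^ k := by
          intro k
          have h21 : (2⁻¹ : ℝ≥0∞) = ENNReal.ofReal 2⁻¹ := by
            rw [ENNReal.ofReal_inv_of_pos two_pos]; simp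
          rw [h21, ← ENNReal.ofReal_pow (by norm_num), ← ENNReal.ofReal_mul (by positivity)]
          congr 1; ring
        simp_rw [this]
        simp_rw [mul_assoc]
        rw [ENNReal.tsum_mul_left, ENNReal.tsum_mul_right, ENNReal.tsum_geometric]
        have h2 : (1 - 2⁻¹ : ℝ≥0∞)⁻¹ = 2 := by
          rw [ENNReal.one_sub_inv_two]
          simp
        rw [h2]
        rw [show ENNReal.ofReal (2 * r) = 2 * ENNReal.ofReal r by
          rw [ENNReal.ofReal_mul (by norm_num)]; norm_num]
        ring

lemma ker_integrableOn (z : ℂ) {r : ℝ} (hr : 0 ≤ r) :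
    IntegrableOn (fun ζ => ‖z - ζ‖⁻¹) (closedBall z r) := by
  refine ⟨((measurable_const.sub measurable_id).norm.inv).aestronglyMeasurable, ?_⟩
  rw [HasFiniteIntegral]
  have h : ∀ ζ : ℂ, (‖ ‖z - ζ‖⁻¹ ‖ₑ : ℝ≥0∞) = ENNReal.ofReal ‖z - ζ‖⁻¹ := fun ζ => by
    rw [Real.enorm_eq_ofReal (by positivity)]
  simp_rw [h]
  refine lt_of_le_of_lt (lint_ker z hr) ?_
  exact ENNReal.mul_lt_top ENNReal.ofReal_lt_top
    (ENNReal.mul_lt_top (by norm_num) measure_ball_lt_top)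

lemma ker_bound (z : ℂ) {r M : ℝ} (hr : 0 ≤ r) (hM : 0 ≤ M) {s : Set ℂ}
    (hsm : MeasurableSet s) (hs : s ⊆ closedBall z r) {f : ℂ → ℂ}
    (hf : ∀ ζ ∈ s, ‖f ζ‖ ≤ M) :
    ‖∫ ζ in s, f ζ * (z - ζ)⁻¹‖ ≤ M * r * (4 * (volume (ball (0:ℂ) 1)).toReal) := by
  set V := volume (ball (0:ℂ) 1)
  have hVne : V ≠ ⊤ := measure_ball_lt_top.ne
  have hRHS : ENNReal.ofReal M * (ENNReal.ofReal r * (4 * V)) ≠ ⊤ := by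
    refine ENNReal.mul_ne_top ENNReal.ofReal_ne_top
      (ENNReal.mul_ne_top ENNReal.ofReal_ne_top (ENNReal.mul_ne_top (by norm_num) hVne))
  refine le_trans (norm_integral_le_lintegral_norm _) ?_
  have step1 : ∫⁻ ζ in s, ENNReal.ofReal ‖f ζ * (z - ζ)⁻¹‖ ≤
      ENNReal.ofReal M * (ENNReal.ofReal r * (4 * V)) := by
    calc ∫⁻ ζ in s, ENNReal.ofReal ‖f ζ * (z - ζ)⁻¹‖
        ≤ ∫⁻ ζ in s, ENNReal.ofReal M * ENNReal.ofReal ‖z - ζ‖⁻¹ := by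
          refine setLIntegral_mono' hsm fun ζ hζ => ?_
          rw [← ENNReal.ofReal_mul hM]
          refine ENNReal.ofReal_le_ofReal ?_
          rw [norm_mul, norm_inv]
          have h1 : ‖(z - ζ)‖⁻¹ ≤ ‖z - ζ‖⁻¹ := le_rfl
          exact mul_le_mul_of_nonneg_right (hf ζ hζ) (by positivity)
      _ = ENNReal.ofReal M * ∫⁻ ζ in s, ENNReal.ofReal ‖z - ζ‖⁻¹ := by
          rw [lintegral_const_mul' _ _ ENNReal.ofReal_ne_top]
      _ ≤ ENNReal.ofReal M * ∫⁻ ζ in closedBall z r, ENNReal.ofReal ‖z - ζ‖⁻¹ := by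
          gcongr
      _ ≤ ENNReal.ofReal M * (ENNReal.ofReal r * (4 * V)) := by
          gcongr
          exact lint_ker z hr
  refine le_trans (ENNReal.toReal_mono hRHS step1) ?_
  rw [ENNReal.toReal_mul, ENNReal.toReal_mul, ENNReal.toReal_mul,
    ENNReal.toReal_ofReal hM, ENNReal.toReal_ofReal hr]
  simp only [ENNReal.toReal_ofNat]
  ring_nf
  exact le_rfl

section helpers

variable {n : ℕ} {K : Set ℂ} {W : Set (Fin n → ℂ)} {g : ℂ × (Fin n → ℂ) → ℂ}

lemma slice_contOn (hgc : ContinuousOn g (K ×ˢ W)) {w : Fin n → ℂ} (hw : w ∈ W) :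
    ContinuousOn (fun ζ => g (ζ, w)) K :=
  hgc.comp ((continuous_id.prodMk continuous_const).continuousOn)
    (fun ζ hζ => Set.mk_mem_prod hζ hw)

lemma slice_contOn' (hgc : ContinuousOn g (K ×ˢ W)) {ζ : ℂ} (hζ : ζ ∈ K) :
    ContinuousOn (fun w => g (ζ, w)) W :=
  hgc.comp ((continuous_const.prodMk continuous_id).continuousOn)
    (fun w hw => Set.mk_mem_prod hζ hw)

lemma slice_contAt (hW : IsOpen W) (hgc : ContinuousOn g (K ×ˢ W)) {ζ : ℂ} (hζ : ζ ∈ K)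
    {w₀ : Fin n → ℂ} (hw₀ : w₀ ∈ W) : ContinuousAt (fun w => g (ζ, w)) w₀ :=
  (slice_contOn' hgc hζ).continuousAt (hW.mem_nhds hw₀)

lemma integrand_aesm (hK : IsCompact K) (hgc : ContinuousOn g (K ×ˢ W))
    {w : Fin n → ℂ} (hw : w ∈ W) (z : ℂ) :
    AEStronglyMeasurable (fun ζ => g (ζ, w) * (z - ζ)⁻¹) (volume.restrict K) :=
  ((slice_contOn hgc hw).aestronglyMeasurable hK.isClosed.measurableSet).mul
    ((measurable_const.sub measurable_id).inv).aestronglyMeasurable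

lemma integrand_intOn (hK : IsCompact K) (hgc : ContinuousOn g (K ×ˢ W))
    {w : Fin n → ℂ} (hw : w ∈ W) (z : ℂ) :
    IntegrableOn (fun ζ => g (ζ, w) * (z - ζ)⁻¹) K := by
  obtain ⟨C, hC⟩ := hK.exists_bound_of_continuousOn (slice_contOn hgc hw)
  obtain ⟨r, hr⟩ := hK.isBounded.subset_closedBall z
  refine Integrable.mono' (((ker_integrableOn z (le_max_right r 0)).mono_set
    (hr.trans (closedBall_subset_closedBall (le_max_left r 0)))).const_mul (max C 0))
    (integrand_aesm hK hgc hw z) ?_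
  filter_upwards [ae_restrict_mem hK.isClosed.measurableSet] with ζ hζ
  rw [norm_mul, norm_inv]
  exact mul_le_mul ((hC ζ hζ).trans (le_max_left C 0)) le_rfl (by positivity) (le_max_right C 0)

lemma cauchy_est (hW : IsOpen W) {f : (Fin n → ℂ) → ℂ}
    (hf : DifferentiableOn ℂ f W) {w₀ x : Fin n → ℂ} {R M : ℝ} (hR : 0 < R)
    (hsub : closedBall w₀ R ⊆ W) (hx : x ∈ ball w₀ (R/2))
    (hM : ∀ w ∈ closedBall w₀ R, ‖f w‖ ≤ M) :
    ‖fderiv ℂ f x‖ ≤ (2*M+1) * (2/R) := by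
  have hM0 : 0 ≤ M := (norm_nonneg _).trans (hM w₀ (mem_closedBall_self hR.le))
  have hxW : x ∈ W := hsub (ball_subset_closedBall (ball_subset_ball (by linarith) hx))
  have hdx : DifferentiableAt ℂ f x := hf.differentiableAt (hW.mem_nhds hxW)
  refine ContinuousLinearMap.opNorm_le_bound _ (by positivity) fun v => ?_
  rcases eq_or_ne v 0 with rfl | hv
  · simp
  have hv0 : (0:ℝ) < ‖v‖ := norm_pos_iff.2 hv
  set ρ := (R/2) / ‖v‖ with hρdef
  have hρ : 0 < ρ := by positivity
  set h : ℂ → ℂ := fun t => f (x + t • v) with hh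
  have hmem : ∀ t ∈ ball (0:ℂ) ρ, x + t • v ∈ closedBall w₀ R := by
    intro t ht
    rw [mem_closedBall]
    calc dist (x + t • v) w₀ ≤ ‖t • v‖ + dist x w₀ := by
          rw [dist_eq_norm]
          have : x + t • v - w₀ = t • v + (x - w₀) := by ring_nf -- maybe abel
          rw [this]
          exact (norm_add_le _ _).trans (by rw [dist_eq_norm])
      _ ≤ R/2 + R/2 := by
          refine add_le_add ?_ (le_of_lt (mem_ball.1 hx))
          rw [norm_smul]
          have : ‖t‖ < ρ := by simpa [dist_eq_norm] using ht
          calc ‖t‖ * ‖v‖ ≤ ρ * ‖v‖ := mul_le_mul_of_nonneg_right this.le (norm_nonneg v)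
            _ = R/2 := by rw [hρdef, div_mul_cancel₀ _ hv0.ne']
      _ = R := by ring
  have hd : DifferentiableOn ℂ h (ball (0:ℂ) ρ) := by
    refine DifferentiableOn.comp hf ?_ (fun t ht => hsub (hmem t ht))
    exact (differentiable_const x |>.add ((differentiable_id).smul_const v)).differentiableOn
  have hmaps : Set.MapsTo h (ball (0:ℂ) ρ) (ball (h 0) (2*M+1)) := by
    intro t ht
    rw [mem_ball, dist_eq_norm]
    have h1 : ‖h t‖ ≤ M := hM _ (hmem t ht)
    have h2 : ‖h 0‖ ≤ M := hM _ (by simpa using hmem 0 (mem_ball_self hρ))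
    calc ‖h t - h 0‖ ≤ ‖h t‖ + ‖h 0‖ := norm_sub_le _ _
      _ < 2*M+1 := by linarith
  have key := Complex.norm_deriv_le_div_of_mapsTo_ball hd (hmaps.mono_right ball_subset_closedBall) hρ
  have haff : HasDerivAt (fun t : ℂ => x + t • v) v 0 := by
    simpa using ((hasDerivAt_id (0:ℂ)).smul_const v).const_add x
  have hD : HasDerivAt h (fderiv ℂ f x v) 0 := by
    have h' : HasFDerivAt f (fderiv ℂ f x) ((fun t : ℂ => x + t • v) 0) := by
      simpa using hdx.hasFDerivAt
    exact h'.comp_hasDerivAt 0 haff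
  rw [hD.deriv] at key
  calc ‖fderiv ℂ f x v‖ ≤ (2*M+1) / ρ := key
    _ = (2*M+1) * (2/R) * ‖v‖ := by
        rw [hρdef, div_div_eq_mul_div]
        field_simp

end helpers

section helpers2

variable {n : ℕ} {K : Set ℂ} {W : Set (Fin n → ℂ)} {g : ℂ × (Fin n → ℂ) → ℂ}

open Filter Topology

lemma fderiv_aesm (hK : IsCompact K) (hW : IsOpen W) (hgc : ContinuousOn g (K ×ˢ W))
    (hgh : ∀ z ∈ K, DifferentiableOn ℂ (fun w => g (z, w)) W)
    {w₀ : Fin n → ℂ} (hw₀ : w₀ ∈ W) :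
    AEStronglyMeasurable (fun ζ => fderiv ℂ (fun w => g (ζ, w)) w₀) (volume.restrict K) := by
  obtain ⟨ρ, hρ, hρsub⟩ : ∃ ρ > 0, closedBall w₀ ρ ⊆ W :=
    (Metric.nhds_basis_closedBall.mem_iff).1 (hW.mem_nhds hw₀)
  set c : ℕ → ℂ := fun k => (((ρ/2) / (k+1) : ℝ) : ℂ) with hc
  have hck : ∀ k : ℕ, (0:ℝ) < (ρ/2) / (k+1) := fun k => by positivity
  have hc0 : ∀ k, c k ≠ 0 := fun k => by
    simp only [hc, ne_eq, Complex.ofReal_eq_zero]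
    exact (hck k).ne'
  have hcnorm : ∀ k, ‖c k‖ ≤ ρ := fun k => by
    rw [hc, Complex.norm_real, Real.norm_eq_abs, abs_of_pos (hck k)]
    rw [div_le_iff₀ (by positivity)]
    nlinarith [hρ, Nat.cast_nonneg (α := ℝ) k]
  have hcmem : ∀ (k : ℕ) (i : Fin n), w₀ + c k • (Pi.single i 1 : Fin n → ℂ) ∈ W := by
    intro k i
    refine hρsub ?_
    rw [mem_closedBall, dist_eq_norm, add_sub_cancel_left, norm_smul, Pi.norm_single,
      norm_one, mul_one]
    exact hcnorm k
  have hctend : Tendsto c atTop (𝓝[≠] (0:ℂ)) := by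
    refine tendsto_nhdsWithin_of_tendsto_nhds_of_eventually_within _ ?_
      (Eventually.of_forall fun k => hc0 k)
    have h1 : Tendsto (fun k : ℕ => (ρ/2) / ((k:ℝ)+1)) atTop (𝓝 0) := by
      simpa [div_eq_mul_inv, one_div] using
        (tendsto_one_div_add_atTop_nhds_zero_nat).const_mul (ρ/2)
    have := (Complex.continuous_ofReal.tendsto 0).comp h1
    have h2 : Tendsto (Complex.ofReal ∘ fun k : ℕ => ρ / 2 / ((k:ℝ) + 1)) atTop (𝓝 0) := by
      simpa using this
    exact h2
  have hφ : ∀ i : Fin n, AEStronglyMeasurable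
      (fun ζ => fderiv ℂ (fun w => g (ζ, w)) w₀ (Pi.single i 1)) (volume.restrict K) := by
    intro i
    refine aestronglyMeasurable_of_tendsto_ae (u := atTop)
      (f := fun k ζ => (c k)⁻¹ * (g (ζ, w₀ + c k • (Pi.single i 1 : Fin n → ℂ)) - g (ζ, w₀))) (fun k => ?_) ?_
    · exact (((slice_contOn hgc (hcmem k i)).sub (slice_contOn hgc hw₀)).aestronglyMeasurable
        hK.isClosed.measurableSet).const_mul _
    · filter_upwards [ae_restrict_mem hK.isClosed.measurableSet] with ζ hζ
      have hdiff : DifferentiableAt ℂ (fun w => g (ζ, w)) w₀ :=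
        (hgh ζ hζ).differentiableAt (hW.mem_nhds hw₀)
      have haff : HasDerivAt (fun t : ℂ => w₀ + t • (Pi.single i 1 : Fin n → ℂ)) (Pi.single i 1) 0 := by
        simpa using ((hasDerivAt_id (0:ℂ)).smul_const ((Pi.single i 1 : Fin n → ℂ))).const_add w₀
      have hD : HasDerivAt (fun t : ℂ => g (ζ, w₀ + t • (Pi.single i 1 : Fin n → ℂ)))
          (fderiv ℂ (fun w => g (ζ, w)) w₀ (Pi.single i 1)) 0 := by
        have h' : HasFDerivAt (fun w => g (ζ, w)) (fderiv ℂ (fun w => g (ζ, w)) w₀)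
            ((fun t : ℂ => w₀ + t • (Pi.single i 1 : Fin n → ℂ)) 0) := by
          simpa using hdiff.hasFDerivAt
        exact h'.comp_hasDerivAt 0 haff
      have := (hasDerivAt_iff_tendsto_slope.1 hD).comp hctend
      refine this.congr fun k => ?_
      simp only [Function.comp_apply, slope_def_field, sub_zero, zero_smul, add_zero,
        div_eq_inv_mul]
  have hsum : AEStronglyMeasurable
      (fun ζ => ∑ i : Fin n, (ContinuousLinearMap.proj (R := ℂ) (φ := fun _ : Fin n => ℂ)
        i).smulRight (fderiv ℂ (fun w => g (ζ, w)) w₀ (Pi.single i 1)))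
      (volume.restrict K) := by
    refine Finset.aestronglyMeasurable_fun_sum _ fun i _ => ?_
    exact (ContinuousLinearMap.smulRightL ℂ (Fin n → ℂ) ℂ
      (ContinuousLinearMap.proj i)).continuous.comp_aestronglyMeasurable (hφ i)
  refine hsum.congr ?_
  filter_upwards [ae_restrict_mem hK.isClosed.measurableSet] with ζ hζ
  refine (ContinuousLinearMap.ext fun v => ?_).symm
  have hv : v = ∑ i : Fin n, (v i) • (Pi.single i 1 : Fin n → ℂ) := by
    have h1 : ∀ i : Fin n, Pi.single i (v i) = v i • (Pi.single i 1 : Fin n → ℂ) := by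
      intro i
      funext j
      rcases eq_or_ne j i with rfl | hji
      · simp
      · simp [Pi.single_apply, hji]
    conv_lhs => rw [← Finset.univ_sum_single v]
    exact Finset.sum_congr rfl fun i _ => h1 i
  rw [ContinuousLinearMap.sum_apply]
  simp only [ContinuousLinearMap.smulRight_apply, ContinuousLinearMap.proj_apply]
  conv_lhs => rw [hv]
  rw [map_sum]
  exact Finset.sum_congr rfl fun i _ =>
    (fderiv ℂ (fun w => g (ζ, w)) w₀).map_smul (v i) _

end helpers2

open Filter Topology

set_option synthInstance.maxHeartbeats 1000000
set_option maxHeartbeats 1600000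

/-- The Cauchy–Green operator preserves holomorphic dependence on a
parameter: if `g : K × W → ℂ` is continuous and holomorphic in `w ∈ W ⊆ ℂⁿ` for each fixed
`z ∈ K`, then `(z, w) ↦ T_K(g(·, w))(z)` is continuous on `ℂ × W` and holomorphic in `w`
for each fixed `z ∈ ℂ`. -/
theorem stmt_9 {n : ℕ} (K : Set ℂ) (hK : IsCompact K)
    (W : Set (Fin n → ℂ)) (hW : IsOpen W)
    (g : ℂ × (Fin n → ℂ) → ℂ) (hgc : ContinuousOn g (K ×ˢ W))
    (hgh : ∀ z ∈ K, DifferentiableOn ℂ (fun w => g (z, w)) W) :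
    ContinuousOn (fun p : ℂ × (Fin n → ℂ) =>
        (Real.pi : ℂ)⁻¹ * ∫ ζ in K, g (ζ, p.2) / (p.1 - ζ)) (Set.univ ×ˢ W) ∧
      ∀ z : ℂ, DifferentiableOn ℂ
        (fun w : Fin n → ℂ => (Real.pi : ℂ)⁻¹ * ∫ ζ in K, g (ζ, w) / (z - ζ)) W := by
  simp only [div_eq_mul_inv]
  set V' : ℝ := 4 * (volume (ball (0:ℂ) 1)).toReal with hV'def
  have hV'0 : 0 ≤ V' := by positivity
  have hKm : MeasurableSet K := hK.isClosed.measurableSet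
  constructor
  · -- continuity
    rintro ⟨z₀, w₀⟩ hp₀
    have hw₀ : w₀ ∈ W := hp₀.2
    obtain ⟨R, hR, hRsub⟩ : ∃ R > 0, closedBall w₀ R ⊆ W :=
      (Metric.nhds_basis_closedBall.mem_iff).1 (hW.mem_nhds hw₀)
    obtain ⟨M₀, hM₀⟩ := (hK.prod (isCompact_closedBall w₀ R)).exists_bound_of_continuousOn
      (hgc.mono (Set.prod_mono subset_rfl hRsub))
    set M := max M₀ 0 with hMdef
    have hM0 : 0 ≤ M := le_max_right _ _
    have hM : ∀ ζ ∈ K, ∀ w ∈ closedBall w₀ R, ‖g (ζ, w)‖ ≤ M :=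
      fun ζ hζ w hw => (hM₀ (ζ, w) ⟨hζ, hw⟩).trans (le_max_left _ _)
    have hcont : ContinuousAt
        (fun p : ℂ × (Fin n → ℂ) => ∫ ζ in K, g (ζ, p.2) * (p.1 - ζ)⁻¹) (z₀, w₀) := by
      rw [ContinuousAt, Metric.tendsto_nhds]
      intro ε hε
      set δ : ℝ := min R (ε / (16 * (M+1) * (V'+1))) with hδdef
      have hδ : 0 < δ := lt_min hR (by positivity)
      set A : Set ℂ := K \ ball z₀ δ with hA
      set B : Set ℂ := K ∩ ball z₀ δ with hB
      have hAm : MeasurableSet A := hKm.diff measurableSet_ball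
      have hBm : MeasurableSet B := hKm.inter measurableSet_ball
      have hAK : A ⊆ K := Set.diff_subset
      have hBK : B ⊆ K := Set.inter_subset_left
      have hFA : ContinuousAt
          (fun p : ℂ × (Fin n → ℂ) => ∫ ζ in A, g (ζ, p.2) * (p.1 - ζ)⁻¹) (z₀, w₀) := by
        refine continuousAt_of_dominated (bound := fun _ => M * (δ/2)⁻¹) ?_ ?_ ?_ ?_
        · have hev : ∀ᶠ p : ℂ × (Fin n → ℂ) in 𝓝 (z₀, w₀), p.2 ∈ W :=
            (continuous_snd.tendsto (z₀, w₀)).eventually (hW.eventually_mem hw₀)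
          filter_upwards [hev] with p hp
          exact (integrand_aesm hK hgc hp p.1).mono_measure
            (Measure.restrict_mono hAK le_rfl)
        · have hev2 : ∀ᶠ p : ℂ × (Fin n → ℂ) in 𝓝 (z₀, w₀),
              p ∈ ball z₀ (δ/2) ×ˢ closedBall w₀ R :=
            prod_mem_nhds (ball_mem_nhds _ (by positivity)) (closedBall_mem_nhds _ hR)
          filter_upwards [hev2] with p hp
          refine (ae_restrict_mem hAm).mono fun ζ hζ => ?_
          rw [norm_mul, norm_inv]
          have h1 : ‖g (ζ, p.2)‖ ≤ M := hM ζ hζ.1 p.2 hp.2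
          have h2 : δ/2 ≤ ‖p.1 - ζ‖ := by
            have ha : δ ≤ dist ζ z₀ := not_lt.1 fun h => hζ.2 (mem_ball.2 h)
            have hb : dist p.1 z₀ < δ/2 := mem_ball.1 hp.1
            have := dist_triangle ζ p.1 z₀
            rw [← dist_eq_norm, dist_comm]
            linarith [dist_comm p.1 z₀ ▸ this]
          have h3 : ‖p.1 - ζ‖⁻¹ ≤ (δ/2)⁻¹ := inv_anti₀ (by positivity) h2
          exact mul_le_mul h1 h3 (by positivity) hM0
        · rw [integrable_const_iff]
          right
          exact isFiniteMeasure_restrict.2 (lt_of_le_of_lt (by simpa using measure_mono (μ := volume) hAK) hK.measure_lt_top).ne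
        · refine (ae_restrict_mem hAm).mono fun ζ hζ => ?_
          have hne : z₀ - ζ ≠ 0 := by
            refine sub_ne_zero.2 fun h => ?_
            exact absurd (mem_ball.2 (by simp [← h, hδ])) hζ.2
          refine ContinuousAt.mul ?_ ?_
          · exact (slice_contAt hW hgc hζ.1 hw₀).comp (f := Prod.snd) (x := (z₀, w₀)) continuous_snd.continuousAt
          · exact ((continuous_fst.continuousAt (x := (z₀, w₀))).sub
              continuousAt_const).inv₀ hne
      have hsplit : ∀ p : ℂ × (Fin n → ℂ), p.2 ∈ W →
          (∫ ζ in K, g (ζ, p.2) * (p.1 - ζ)⁻¹) =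
            (∫ ζ in A, g (ζ, p.2) * (p.1 - ζ)⁻¹) + ∫ ζ in B, g (ζ, p.2) * (p.1 - ζ)⁻¹ := by
        intro p hp
        have hunion : A ∪ B = K := Set.diff_union_inter K (ball z₀ δ)
        rw [← hunion, setIntegral_union (Set.disjoint_sdiff_left.mono_right Set.inter_subset_right) hBm
          ((integrand_intOn hK hgc hp p.1).mono_set hAK)
          ((integrand_intOn hK hgc hp p.1).mono_set hBK)]
      have hFA' := Metric.tendsto_nhds.1 hFA (ε/2) (half_pos hε)
      have hev2 : ∀ᶠ p : ℂ × (Fin n → ℂ) in 𝓝 (z₀, w₀),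
          p ∈ ball z₀ (δ/2) ×ˢ closedBall w₀ R :=
        prod_mem_nhds (ball_mem_nhds _ (by positivity)) (closedBall_mem_nhds _ hR)
      filter_upwards [hev2, hFA'] with p hp hpA
      have hpW : p.2 ∈ W := hRsub hp.2
      -- bound the B-pieces
      have hBp : ‖∫ ζ in B, g (ζ, p.2) * (p.1 - ζ)⁻¹‖ ≤ M * (2*δ) * V' := by
        rw [hV'def]
        refine ker_bound p.1 (by positivity) hM0 hBm ?_ (fun ζ hζ => hM ζ hζ.1 p.2 hp.2)
        intro ζ hζ
        rw [mem_closedBall]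
        have h1 : dist ζ z₀ < δ := mem_ball.1 hζ.2
        have h2 : dist p.1 z₀ < δ/2 := mem_ball.1 hp.1
        have := dist_triangle ζ z₀ p.1
        rw [dist_comm z₀ p.1] at this
        linarith
      have hBp₀ : ‖∫ ζ in B, g (ζ, w₀) * (z₀ - ζ)⁻¹‖ ≤ M * (2*δ) * V' := by
        rw [hV'def]
        refine ker_bound z₀ (by positivity) hM0 hBm ?_
          (fun ζ hζ => hM ζ hζ.1 w₀ (mem_closedBall_self hR.le))
        intro ζ hζ
        rw [mem_closedBall]
        have h1 : dist ζ z₀ < δ := mem_ball.1 hζ.2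
        linarith
      rw [dist_eq_norm, hsplit p hpW, hsplit (z₀, w₀) hw₀]
      have hδε : M * (2*δ) * V' + M * (2*δ) * V' ≤ ε/2 := by
        have h1 : δ ≤ ε / (16 * (M+1) * (V'+1)) := min_le_right _ _
        have h2 : M * (2*δ) * V' ≤ (M+1) * (2*δ) * (V'+1) := by nlinarith
        have h3 : (M+1) * (2*δ) * (V'+1) ≤ ε/4 := by
          rw [le_div_iff₀ (by positivity : (0:ℝ) < 16 * (M+1) * (V'+1))] at h1
          nlinarith
        linarith
      calc ‖(∫ ζ in A, g (ζ, p.2) * (p.1 - ζ)⁻¹) + (∫ ζ in B, g (ζ, p.2) * (p.1 - ζ)⁻¹)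
            - ((∫ ζ in A, g (ζ, w₀) * (z₀ - ζ)⁻¹) + ∫ ζ in B, g (ζ, w₀) * (z₀ - ζ)⁻¹)‖
          = ‖((∫ ζ in A, g (ζ, p.2) * (p.1 - ζ)⁻¹) - ∫ ζ in A, g (ζ, w₀) * (z₀ - ζ)⁻¹)
            + ((∫ ζ in B, g (ζ, p.2) * (p.1 - ζ)⁻¹) - ∫ ζ in B, g (ζ, w₀) * (z₀ - ζ)⁻¹)‖ := by
            congr 1
            ring
        _ ≤ ‖(∫ ζ in A, g (ζ, p.2) * (p.1 - ζ)⁻¹) - ∫ ζ in A, g (ζ, w₀) * (z₀ - ζ)⁻¹‖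
            + (‖∫ ζ in B, g (ζ, p.2) * (p.1 - ζ)⁻¹‖ + ‖∫ ζ in B, g (ζ, w₀) * (z₀ - ζ)⁻¹‖) :=
            (norm_add_le _ _).trans (by gcongr; exact norm_sub_le _ _)
        _ < ε/2 + ε/2 := by
            have := dist_eq_norm (∫ ζ in A, g (ζ, p.2) * (p.1 - ζ)⁻¹)
              (∫ ζ in A, g (ζ, w₀) * (z₀ - ζ)⁻¹) ▸ hpA
            linarith
        _ = ε := add_halves ε
    exact (continuousAt_const.mul hcont).continuousWithinAt
  · -- differentiability in w
    intro z w₀ hw₀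
    obtain ⟨R, hR, hRsub⟩ : ∃ R > 0, closedBall w₀ R ⊆ W :=
      (Metric.nhds_basis_closedBall.mem_iff).1 (hW.mem_nhds hw₀)
    obtain ⟨M₀, hM₀⟩ := (hK.prod (isCompact_closedBall w₀ R)).exists_bound_of_continuousOn
      (hgc.mono (Set.prod_mono subset_rfl hRsub))
    set M := max M₀ 0 with hMdef
    have hM0 : 0 ≤ M := le_max_right _ _
    have hM : ∀ ζ ∈ K, ∀ w ∈ closedBall w₀ R, ‖g (ζ, w)‖ ≤ M :=
      fun ζ hζ w hw => (hM₀ (ζ, w) ⟨hζ, hw⟩).trans (le_max_left _ _)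
    obtain ⟨r₀, hr₀⟩ := hK.isBounded.subset_closedBall z
    set r := max r₀ 0 with hrdef
    have hr : 0 ≤ r := le_max_right _ _
    have hKr : K ⊆ closedBall z r := hr₀.trans (closedBall_subset_closedBall (le_max_left _ _))
    have hball : ∀ x ∈ ball w₀ (R/2), x ∈ W := fun x hx =>
      hRsub (ball_subset_closedBall (ball_subset_ball (by linarith) hx))
    have key : HasFDerivAt (fun w => ∫ ζ in K, g (ζ, w) * (z - ζ)⁻¹)
        (∫ ζ in K, (z - ζ)⁻¹ • fderiv ℂ (fun w => g (ζ, w)) w₀) w₀ := by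
      refine hasFDerivAt_integral_of_dominated_of_fderiv_le
        (F := fun w ζ => g (ζ, w) * (z - ζ)⁻¹)
        (F' := fun x ζ => (z - ζ)⁻¹ • fderiv ℂ (fun w => g (ζ, w)) x)
        (bound := fun ζ => (2*M+1) * (2/R) * ‖z - ζ‖⁻¹)
        (ball_mem_nhds w₀ (half_pos hR)) ?_ ?_ ?_ ?_ ?_ ?_
      · exact Filter.eventually_of_mem (hW.mem_nhds hw₀) fun x hx => integrand_aesm hK hgc hx z
      · exact integrand_intOn hK hgc hw₀ z
      · exact (((measurable_const.sub measurable_id).inv).aestronglyMeasurable).smul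
          (fderiv_aesm hK hW hgc hgh hw₀)
      · refine (ae_restrict_mem hKm).mono fun ζ hζ x hx => ?_
        rw [show ‖(z - ζ)⁻¹ • fderiv ℂ (fun w => g (ζ, w)) x‖
            = ‖(z - ζ)⁻¹‖ * ‖fderiv ℂ (fun w => g (ζ, w)) x‖ from norm_smul _ _, norm_inv]
        have hest : ‖fderiv ℂ (fun w => g (ζ, w)) x‖ ≤ (2*M+1) * (2/R) :=
          cauchy_est hW (hgh ζ hζ) hR hRsub hx (fun w hw => hM ζ hζ w hw)
        rw [mul_comm]
        exact mul_le_mul_of_nonneg_right hest (by positivity)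
      · exact ((ker_integrableOn z hr).mono_set hKr).const_mul _
      · refine (ae_restrict_mem hKm).mono fun ζ hζ x hx => ?_
        have hdx : DifferentiableAt ℂ (fun w => g (ζ, w)) x :=
          (hgh ζ hζ).differentiableAt (hW.mem_nhds (hball x hx))
        exact hdx.hasFDerivAt.mul_const ((z - ζ)⁻¹)
    exact ((key.differentiableAt).const_mul _).differentiableWithinAt
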